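/- Every society (G, Ω) that admits a linear decomposition of adhesion at most d has depth at most 2d; that is, every transaction in (G, Ω) has at most 2d paths. -/

import Mathlib

/-- The cyclic interval of `Fin ℓ` starting at `a` and of length `n`. -/
def cyclicInterval (ℓ : ℕ) (a : Fin ℓ) (n : ℕ) : Set (Fin ℓ) :=
  {i | ∃ j < n, (i : ℕ) = ((a : ℕ) + j) % ℓ}

/-- A segment of the cyclic order on `Fin ℓ`. -/
def IsSegment (ℓ : ℕ) (S : Set (Fin ℓ)) : Prop :=
  ∃ (a : Fin ℓ) (n : ℕ), n ≤ ℓ ∧ S = cyclicInterval ℓ a n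

/-- The position of `i` in the cyclic order of `Fin ℓ`, relative to the starting point `a`. -/
def relPos {ℓ : ℕ} (a i : Fin ℓ) : ℕ := ((i : ℕ) + ℓ - (a : ℕ)) % ℓ

/-- A transaction of order `t` in the society `(G, ω)`, where `ω : Fin ℓ → V` enumerates
the society vertices in their cyclic order: a linkage of `t` pairwise vertex-disjoint
`A`–`B`-paths for two disjoint segments `A`, `B` of the cyclic order, each path meeting
the society vertices only in its endpoints. -/
structure Transaction {V : Type} (G : SimpleGraph V) {ℓ : ℕ} (ω : Fin ℓ → V) (t : ℕ) where
  A : Set (Fin ℓ)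
  B : Set (Fin ℓ)
  segA : IsSegment ℓ A
  segB : IsSegment ℓ B
  disjAB : Disjoint A B
  src : Fin t → Fin ℓ
  tgt : Fin t → Fin ℓ
  src_mem : ∀ i, src i ∈ A
  tgt_mem : ∀ i, tgt i ∈ B
  walk : ∀ i, G.Walk (ω (src i)) (ω (tgt i))
  isPath : ∀ i, (walk i).IsPath
  internal : ∀ i, ∀ x ∈ (walk i).support,
    (∃ j ∈ A ∪ B, ω j = x) → x = ω (src i) ∨ x = ω (tgt i)
  disjointPaths : ∀ i j, i ≠ j → ∀ x, x ∈ (walk i).support → x ∉ (walk j).support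

/-- A linear decomposition of the society `(G, ω)`: bags `X i` indexed by the society
vertices in cyclic order, covering all vertices and edges, with `ω i ∈ X i`, and such
that the indices of the bags containing any fixed vertex form an interval. -/
structure LinearDecomp {V : Type} (G : SimpleGraph V) {ℓ : ℕ} (ω : Fin ℓ → V) where
  X : Fin ℓ → Set V
  mem_bag : ∀ i, ω i ∈ X i
  covers : ∀ v : V, ∃ i, v ∈ X i
  covers_edge : ∀ ⦃u v : V⦄, G.Adj u v → ∃ i, u ∈ X i ∧ v ∈ X i
  interval : ∀ x : V, ∀ i j k : Fin ℓ, i ≤ j → j ≤ k → x ∈ X i → x ∈ X k → x ∈ X j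

/-- a society admitting a linear decomposition of adhesion at most `d`
has depth at most `2d`: every transaction has at most `2d` paths. -/
lemma mem_cyclicInterval' {ℓ : ℕ} {a : Fin ℓ} {m : ℕ} (hm : m ≤ ℓ) {i : Fin ℓ} :
    i ∈ cyclicInterval ℓ a m ↔
      (((a:ℕ) ≤ i ∧ (i:ℕ) < (a:ℕ) + m) ∨ (i:ℕ) + ℓ < (a:ℕ) + m) := by
  have ha := a.isLt
  have hi := i.isLt
  constructor
  · rintro ⟨j, hj, hij⟩
    rcases Nat.lt_or_ge ((a:ℕ) + j) ℓ with h | h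
    · rw [Nat.mod_eq_of_lt h] at hij; omega
    · rw [Nat.mod_eq_sub_mod h, Nat.mod_eq_of_lt (by omega)] at hij; omega
  · rintro (⟨h1, h2⟩ | h)
    · exact ⟨(i:ℕ) - (a:ℕ), by omega, by rw [Nat.add_sub_cancel' h1, Nat.mod_eq_of_lt hi]⟩
    · refine ⟨(i:ℕ) + ℓ - (a:ℕ), by omega, ?_⟩
      have : (a:ℕ) + ((i:ℕ) + ℓ - (a:ℕ)) = (i:ℕ) + ℓ := by omega
      rw [this, Nat.add_mod_right, Nat.mod_eq_of_lt hi]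

lemma segment_sep {ℓ : ℕ} {A B : Set (Fin ℓ)} (hA : IsSegment ℓ A) (hB : IsSegment ℓ B)
    (hAB : Disjoint A B) (hAne : A.Nonempty) (hBne : B.Nonempty) :
    ∃ p q : ℕ, p + 1 < ℓ ∧ q + 1 < ℓ ∧
      ∀ i ∈ A, ∀ j ∈ B,
        ((i:ℕ) ≤ p ∧ p < (j:ℕ)) ∨ ((j:ℕ) ≤ p ∧ p < (i:ℕ)) ∨
        ((i:ℕ) ≤ q ∧ q < (j:ℕ)) ∨ ((j:ℕ) ≤ q ∧ q < (i:ℕ)) := by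
  obtain ⟨a, m, hm, rfl⟩ := hA
  obtain ⟨b, n, hn, rfl⟩ := hB
  have ha := a.isLt
  have hb := b.isLt
  have hℓ : 0 < ℓ := by omega
  have hdisj := Set.disjoint_left.mp hAB
  -- m, n ≥ 1
  obtain ⟨iA, hiA⟩ := hAne
  obtain ⟨iB, hiB⟩ := hBne
  have hm1 : 1 ≤ m := by
    rcases (mem_cyclicInterval' hm).mp hiA with h | h <;> omega
  have hn1 : 1 ≤ n := by
    rcases (mem_cyclicInterval' hn).mp hiB with h | h <;> omega
  rcases Nat.lt_or_ge ℓ ((a:ℕ) + m) with hwA | hwA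
  · rcases Nat.lt_or_ge ℓ ((b:ℕ) + n) with hwB | hwB
    · -- both wrap: 0 in both, contradiction
      exfalso
      have h0A : (⟨0, hℓ⟩ : Fin ℓ) ∈ cyclicInterval ℓ a m :=
        (mem_cyclicInterval' hm).mpr (Or.inr (by simp; omega))
      have h0B : (⟨0, hℓ⟩ : Fin ℓ) ∈ cyclicInterval ℓ b n :=
        (mem_cyclicInterval' hn).mpr (Or.inr (by simp; omega))
      exact hdisj h0A h0B
    · -- A wraps, B doesn't
      have hB' : ∀ j ∈ cyclicInterval ℓ b n, (a:ℕ) + m - ℓ ≤ (j:ℕ) ∧ (j:ℕ) < (a:ℕ) := by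
        intro j hj
        have hjA : j ∉ cyclicInterval ℓ a m := fun h => hdisj h hj
        rw [mem_cyclicInterval' hm] at hjA
        have := j.isLt
        push_neg at hjA
        omega
      refine ⟨(a:ℕ) - 1, (a:ℕ) + m - ℓ - 1, ?_, ?_, ?_⟩
      · have := (hB' iB hiB).2; omega
      · omega
      · intro i hi j hj
        obtain ⟨hj1, hj2⟩ := hB' j hj
        rcases (mem_cyclicInterval' hm).mp hi with ⟨h1, _⟩ | h
        · exact Or.inr (Or.inl ⟨by omega, by omega⟩)
        · exact Or.inr (Or.inr (Or.inl ⟨by omega, by omega⟩))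
  · rcases Nat.lt_or_ge ℓ ((b:ℕ) + n) with hwB | hwB
    · -- B wraps, A doesn't
      have hA' : ∀ i ∈ cyclicInterval ℓ a m, (b:ℕ) + n - ℓ ≤ (i:ℕ) ∧ (i:ℕ) < (b:ℕ) := by
        intro i hi
        have hiB' : i ∉ cyclicInterval ℓ b n := fun h => hdisj hi h
        rw [mem_cyclicInterval' hn] at hiB'
        have := i.isLt
        push_neg at hiB'
        omega
      refine ⟨(b:ℕ) - 1, (b:ℕ) + n - ℓ - 1, ?_, ?_, ?_⟩
      · have := (hA' iA hiA).2; omega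
      · omega
      · intro i hi j hj
        obtain ⟨hi1, hi2⟩ := hA' i hi
        rcases (mem_cyclicInterval' hn).mp hj with ⟨h1, _⟩ | h
        · exact Or.inl ⟨by omega, by omega⟩
        · exact Or.inr (Or.inr (Or.inr ⟨by omega, by omega⟩))
    · -- neither wraps: linear intervals
      have hmemA : ∀ i, i ∈ cyclicInterval ℓ a m ↔ ((a:ℕ) ≤ i ∧ (i:ℕ) < (a:ℕ) + m) := by
        intro i
        rw [mem_cyclicInterval' hm]
        have := i.isLt; constructor
        · rintro (h | h); exact h; omega
        · exact Or.inl
      have hmemB : ∀ j, j ∈ cyclicInterval ℓ b n ↔ ((b:ℕ) ≤ j ∧ (j:ℕ) < (b:ℕ) + n) := by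
        intro j
        rw [mem_cyclicInterval' hn]
        have := j.isLt; constructor
        · rintro (h | h); exact h; omega
        · exact Or.inl
      rcases le_or_gt ((a:ℕ) + m) (b:ℕ) with hab | hab
      · refine ⟨(b:ℕ) - 1, (b:ℕ) - 1, by omega, by omega, ?_⟩
        intro i hi j hj
        rw [hmemA] at hi; rw [hmemB] at hj
        exact Or.inl ⟨by omega, by omega⟩
      rcases le_or_gt ((b:ℕ) + n) (a:ℕ) with hba | hba
      · refine ⟨(a:ℕ) - 1, (a:ℕ) - 1, by omega, by omega, ?_⟩
        intro i hi j hj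
        rw [hmemA] at hi; rw [hmemB] at hj
        exact Or.inr (Or.inl ⟨by omega, by omega⟩)
      · exfalso
        have hc : (⟨max (a:ℕ) (b:ℕ), by omega⟩ : Fin ℓ) ∈ cyclicInterval ℓ a m := by
          rw [hmemA]; simp; omega
        have hc' : (⟨max (a:ℕ) (b:ℕ), by omega⟩ : Fin ℓ) ∈ cyclicInterval ℓ b n := by
          rw [hmemB]; simp; omega
        exact hdisj hc hc'

lemma crossing {V : Type} {G : SimpleGraph V} {ℓ : ℕ} {ω : Fin ℓ → V}
    (D : LinearDecomp G ω) (p : ℕ) (hp : p + 1 < ℓ)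
    {u v : V} (w : G.Walk u v) :
    (∃ i : Fin ℓ, (i:ℕ) ≤ p ∧ u ∈ D.X i) → (∃ j : Fin ℓ, p < (j:ℕ) ∧ v ∈ D.X j) →
    ∃ x ∈ w.support, x ∈ D.X ⟨p, by omega⟩ ∩ D.X ⟨p+1, hp⟩ := by
  induction w with
  | nil =>
    rintro ⟨i, hi, hui⟩ ⟨j, hj, huj⟩
    refine ⟨_, SimpleGraph.Walk.start_mem_support _, ?_, ?_⟩
    · exact D.interval _ i ⟨p, by omega⟩ j (by simp [Fin.le_def]; omega)
        (by simp [Fin.le_def]; omega) hui huj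
    · exact D.interval _ i ⟨p+1, hp⟩ j (by simp [Fin.le_def]; omega)
        (by simp [Fin.le_def]; omega) hui huj
  | @cons x y z hadj w ih =>
    rintro ⟨i, hi, hui⟩ hv
    obtain ⟨k, hk1, hk2⟩ := D.covers_edge hadj
    rcases le_or_gt (k:ℕ) p with hkp | hkp
    · obtain ⟨c, hc, hcm⟩ := ih ⟨k, hkp, hk2⟩ hv
      exact ⟨c, by simp [hc], hcm⟩
    · refine ⟨x, SimpleGraph.Walk.start_mem_support _, ?_, ?_⟩
      · exact D.interval _ i ⟨p, by omega⟩ k (by simp [Fin.le_def]; omega)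
          (by simp [Fin.le_def]; omega) hui hk1
      · exact D.interval _ i ⟨p+1, hp⟩ k (by simp [Fin.le_def]; omega)
          (by simp [Fin.le_def]; omega) hui hk1

theorem depth_le_of_linearDecomp {V : Type} [Fintype V] (G : SimpleGraph V)
    (ℓ : ℕ) (ω : Fin ℓ → V) (hω : Function.Injective ω)
    (D : LinearDecomp G ω) (d : ℕ)
    (hadh : ∀ i : Fin ℓ, ∀ h : (i : ℕ) + 1 < ℓ,
      ((D.X i) ∩ D.X ⟨(i : ℕ) + 1, h⟩).ncard ≤ d)
    (t : ℕ) (T : Transaction G ω t) : t ≤ 2 * d := by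
  rcases Nat.eq_zero_or_pos t with rfl | ht
  · exact Nat.zero_le _
  have hAne : T.A.Nonempty := ⟨T.src ⟨0, ht⟩, T.src_mem ⟨0, ht⟩⟩
  have hBne : T.B.Nonempty := ⟨T.tgt ⟨0, ht⟩, T.tgt_mem ⟨0, ht⟩⟩
  obtain ⟨p, q, hp, hq, hsep⟩ := segment_sep T.segA T.segB T.disjAB hAne hBne
  set Yp : Set V := D.X ⟨p, by omega⟩ ∩ D.X ⟨p+1, hp⟩ with hYp
  set Yq : Set V := D.X ⟨q, by omega⟩ ∩ D.X ⟨q+1, hq⟩ with hYq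
  have key : ∀ i : Fin t, ∃ x ∈ (T.walk i).support, x ∈ Yp ∪ Yq := by
    intro i
    rcases hsep _ (T.src_mem i) _ (T.tgt_mem i) with h | h | h | h
    · obtain ⟨x, hx, hxm⟩ := crossing D p hp (T.walk i)
        ⟨T.src i, h.1, D.mem_bag _⟩ ⟨T.tgt i, h.2, D.mem_bag _⟩
      exact ⟨x, hx, Or.inl hxm⟩
    · obtain ⟨x, hx, hxm⟩ := crossing D p hp (T.walk i).reverse
        ⟨T.tgt i, h.1, D.mem_bag _⟩ ⟨T.src i, h.2, D.mem_bag _⟩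
      rw [SimpleGraph.Walk.support_reverse, List.mem_reverse] at hx
      exact ⟨x, hx, Or.inl hxm⟩
    · obtain ⟨x, hx, hxm⟩ := crossing D q hq (T.walk i)
        ⟨T.src i, h.1, D.mem_bag _⟩ ⟨T.tgt i, h.2, D.mem_bag _⟩
      exact ⟨x, hx, Or.inr hxm⟩
    · obtain ⟨x, hx, hxm⟩ := crossing D q hq (T.walk i).reverse
        ⟨T.tgt i, h.1, D.mem_bag _⟩ ⟨T.src i, h.2, D.mem_bag _⟩
      rw [SimpleGraph.Walk.support_reverse, List.mem_reverse] at hx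
      exact ⟨x, hx, Or.inr hxm⟩
  choose f hf1 hf2 using key
  have hinj : Function.Injective (fun i : Fin t => (⟨f i, hf2 i⟩ : (Yp ∪ Yq : Set V))) := by
    intro i j hij
    by_contra hne
    have : f i = f j := congrArg Subtype.val hij
    exact T.disjointPaths i j hne (f i) (hf1 i) (this ▸ hf1 j)
  have h1 : t ≤ (Yp ∪ Yq).ncard := by
    have := Nat.card_le_card_of_injective _ hinj
    rw [← Nat.card_coe_set_eq]
    rw [Nat.card_eq_fintype_card (α := Fin t), Fintype.card_fin] at this
    exact this
  have h2 : (Yp ∪ Yq).ncard ≤ Yp.ncard + Yq.ncard := Set.ncard_union_le _ _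
  have h3 : Yp.ncard ≤ d := hadh ⟨p, by omega⟩ hp
  have h4 : Yq.ncard ≤ d := hadh ⟨q, by omega⟩ hq
  omega
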